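/- The VaR Bellman optimality operator T_VaR defined by (T_VaR v)_s = max_{a∈A} VaR_α[ p̃_{s,a}ᵀ(r_{s,a} + γv) ] is a γ-contraction on ℝ^S with respect to the sup-norm: ‖T_VaR u − T_VaR v‖_∞ ≤ γ‖u − v‖_∞. -/

import Mathlib

open MeasureTheory

/-- Value at Risk at confidence level α: VaR_α[X] = sup {t | Pr[X ≥ t] ≥ 1 - α}. -/
noncomputable def VaR {Ω : Type*} [MeasurableSpace Ω] (P : Measure Ω)
    (X : Ω → ℝ) (α : ℝ) : ℝ :=
  sSup {t : ℝ | 1 - α ≤ (P {ω | t ≤ X ω}).toReal}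

/-- The VaR Bellman optimality operator:
`(T_VaR v) s = max_a VaR_α [ p̃_{s,a}ᵀ (r_{s,a} + γ v) ]`. -/
noncomputable def TVaR {S A Ω : Type*} [Fintype S] [Fintype A] [Nonempty A]
    [MeasurableSpace Ω] (P : Measure Ω) (α γ : ℝ)
    (r : S → A → S → ℝ) (p : S → A → Ω → S → ℝ) (v : S → ℝ) : S → ℝ :=
  fun s => ⨆ a : A, VaR P (fun ω => ∑ s' : S, p s a ω s' * (r s a s' + γ * v s')) α

lemma VaR_le_VaR_add {Ω : Type*} [Fintype Ω] [MeasurableSpace Ω] (P : Measure Ω)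
    [IsProbabilityMeasure P] {α c : ℝ} (hα : α ∈ Set.Ioo (0 : ℝ) 1)
    {X Y : Ω → ℝ} (h : ∀ ω, X ω ≤ Y ω + c) :
    VaR P X α ≤ VaR P Y α + c := by
  haveI : Nonempty Ω := by
    by_contra h'
    simp only [not_nonempty_iff] at h'
    have h1 := measure_univ (μ := P)
    rw [Set.univ_eq_empty_iff.mpr h', measure_empty] at h1
    exact zero_ne_one h1
  have hSy_bdd : BddAbove {t : ℝ | 1 - α ≤ (P {ω | t ≤ Y ω}).toReal} := by
    refine ⟨Finset.univ.sup' Finset.univ_nonempty Y, fun t ht => ?_⟩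
    by_contra hlt
    push_neg at hlt
    have hempty : {ω | t ≤ Y ω} = ∅ := by
      ext ω
      simp only [Set.mem_setOf_eq, Set.mem_empty_iff_false, iff_false, not_le]
      exact lt_of_le_of_lt (Finset.le_sup' Y (Finset.mem_univ ω)) hlt
    rw [Set.mem_setOf_eq, hempty, measure_empty, ENNReal.toReal_zero] at ht
    linarith [hα.2]
  have hSx_ne : ({t : ℝ | 1 - α ≤ (P {ω | t ≤ X ω}).toReal}).Nonempty := by
    refine ⟨Finset.univ.inf' Finset.univ_nonempty X, ?_⟩
    have huniv : {ω | Finset.univ.inf' Finset.univ_nonempty X ≤ X ω} = Set.univ := by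
      ext ω
      simp only [Set.mem_setOf_eq, Set.mem_univ, iff_true]
      exact Finset.inf'_le X (Finset.mem_univ ω)
    rw [Set.mem_setOf_eq, huniv, measure_univ, ENNReal.toReal_one]
    linarith [hα.1]
  unfold VaR
  apply csSup_le hSx_ne
  intro t ht
  have hmem : t - c ∈ {t : ℝ | 1 - α ≤ (P {ω | t ≤ Y ω}).toReal} := by
    refine le_trans ht (ENNReal.toReal_mono (measure_ne_top P _) (measure_mono ?_))
    intro ω hω
    simp only [Set.mem_setOf_eq] at hω ⊢
    linarith [h ω]
  linarith [le_csSup hSy_bdd hmem]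

/-- the VaR Bellman optimality operator is a γ-contraction in sup-norm. -/
theorem TVaR_contraction
    {S A Ω : Type*} [Fintype S] [Nonempty S] [Fintype A] [Nonempty A]
    [Fintype Ω] [MeasurableSpace Ω] (P : Measure Ω) [IsProbabilityMeasure P]
    (α γ : ℝ) (hα : α ∈ Set.Ioo (0 : ℝ) 1) (hγ0 : 0 ≤ γ) (hγ1 : γ < 1)
    (r : S → A → S → ℝ) (p : S → A → Ω → S → ℝ)
    (hp : ∀ s a ω, (∀ s', 0 ≤ p s a ω s') ∧ ∑ s' : S, p s a ω s' = 1) :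
    ∀ u v : S → ℝ, ‖TVaR P α γ r p u - TVaR P α γ r p v‖ ≤ γ * ‖u - v‖ := by
  intro u v
  set c := γ * ‖u - v‖ with hc_def
  have hc : 0 ≤ c := mul_nonneg hγ0 (norm_nonneg _)
  -- pointwise bound on the random variables
  have key : ∀ (s : S) (a : A) (w w' : S → ℝ), ∀ ω,
      (∑ s' : S, p s a ω s' * (r s a s' + γ * w s')) ≤
      (∑ s' : S, p s a ω s' * (r s a s' + γ * w' s')) + γ * ‖w - w'‖ := by
    intro s a w w' ω
    have hdiff : (∑ s' : S, p s a ω s' * (r s a s' + γ * w s')) -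
        (∑ s' : S, p s a ω s' * (r s a s' + γ * w' s')) =
        ∑ s' : S, p s a ω s' * (γ * (w s' - w' s')) := by
      rw [← Finset.sum_sub_distrib]
      congr 1; ext s'; ring
    have hbound : ∑ s' : S, p s a ω s' * (γ * (w s' - w' s')) ≤ γ * ‖w - w'‖ := by
      calc ∑ s' : S, p s a ω s' * (γ * (w s' - w' s'))
          ≤ ∑ s' : S, p s a ω s' * (γ * ‖w - w'‖) := by
            apply Finset.sum_le_sum
            intro s' _
            apply mul_le_mul_of_nonneg_left _ ((hp s a ω).1 s')
            apply mul_le_mul_of_nonneg_left _ hγ0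
            calc w s' - w' s' ≤ |w s' - w' s'| := le_abs_self _
              _ = ‖(w - w') s'‖ := by simp [Real.norm_eq_abs]
              _ ≤ ‖w - w'‖ := norm_le_pi_norm _ s'
        _ = γ * ‖w - w'‖ := by
            rw [← Finset.sum_mul, (hp s a ω).2, one_mul]
    linarith [hdiff ▸ hbound]
  -- VaR comparison per state/action
  have hVaR : ∀ (s : S) (a : A) (w w' : S → ℝ),
      VaR P (fun ω => ∑ s' : S, p s a ω s' * (r s a s' + γ * w s')) α ≤
      VaR P (fun ω => ∑ s' : S, p s a ω s' * (r s a s' + γ * w' s')) α + γ * ‖w - w'‖ := by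
    intro s a w w'
    exact VaR_le_VaR_add P hα (key s a w w')
  -- sup comparison per state
  have hsup : ∀ (s : S) (w w' : S → ℝ),
      TVaR P α γ r p w s ≤ TVaR P α γ r p w' s + γ * ‖w - w'‖ := by
    intro s w w'
    unfold TVaR
    apply ciSup_le
    intro a
    refine le_trans (hVaR s a w w') (add_le_add_left ?_ _)
    exact le_ciSup (Set.Finite.bddAbove (Set.finite_range
      (fun a => VaR P (fun ω => ∑ s' : S, p s a ω s' * (r s a s' + γ * w' s')) α))) a
  have hc_def' : c = γ * ‖v - u‖ := by rw [hc_def, norm_sub_rev]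
  apply (pi_norm_le_iff_of_nonneg hc).mpr
  intro s
  rw [Pi.sub_apply, Real.norm_eq_abs, abs_sub_le_iff]
  constructor
  · have h1 := hsup s u v
    rw [← hc_def] at h1
    linarith
  · have h1 := hsup s v u
    rw [← hc_def'] at h1
    linarith
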